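/- Let r ≥ 1 and let r = r₁ + ⋯ + r_h be a partition of r with r₁ ≥ r₂ ≥ ⋯ ≥ r_h ≥ 1, and let F_λ(a,b) be the associated standard skew-symmetric pencil of size (2r+h)×(2r+h). Then for every (a,b) ∈ ℂ² with (a,b) ≠ (0,0) the matrix F_λ(a,b) has rank exactly 2r. Moreover the span of F_λ(1,0) and F_λ(0,1) is a 2-dimensional nondegenerate subspace of the skew-symmetric (2r+h)×(2r+h) complex matrices. -/

import Mathlib

open Matrix

open scoped Classical in
/-- Partial sums of the partition: `partialSum rpart k = r₁ + ⋯ + r_k`. -/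
noncomputable def partialSum {h : ℕ} (rpart : Fin h → ℕ) (k : ℕ) : ℕ :=
  ∑ j ∈ Finset.range k, if hj : j < h then rpart ⟨j, hj⟩ else 0

open scoped Classical in
/-- The block-diagonal matrix `F̄(a,b)` with blocks `U_{r₁}(a,b), …, U_{r_h}(a,b)`,
where `U_{r_i}(a,b)` is the `r_i × (r_i+1)` matrix with `a` on the main diagonal and
`b` on the superdiagonal.  Row `s` lies in block `i` iff
`partialSum rpart i ≤ s < partialSum rpart (i+1)`, and then the entry in column `t`
is `a` if `t = s + i`, `b` if `t = s + i + 1`, and `0` otherwise. -/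
noncomputable def Fbar {h : ℕ} (rpart : Fin h → ℕ) (r m : ℕ) (a b : ℂ) :
    Matrix (Fin r) (Fin m) ℂ :=
  Matrix.of fun s t =>
    if ∃ i : Fin h, partialSum rpart i ≤ s.val ∧ s.val < partialSum rpart (i.val + 1) ∧
        t.val = s.val + i.val then a
    else if ∃ i : Fin h, partialSum rpart i ≤ s.val ∧ s.val < partialSum rpart (i.val + 1) ∧
        t.val = s.val + i.val + 1 then b
    else 0

/-- The standard skew-symmetric pencil `F_λ(a,b)` of size `(2r+h)×(2r+h)` associated to a
partition `r = r₁ + ⋯ + r_h`, with block form `[[0, F̄(a,b)], [−F̄(a,b)ᵀ, 0]]`. -/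
noncomputable def Fpencil {h : ℕ} (rpart : Fin h → ℕ) (r : ℕ) (a b : ℂ) :
    Matrix (Fin (2*r + h)) (Fin (2*r + h)) ℂ :=
  Matrix.reindex (finSumFinEquiv.trans (finCongr (by omega)))
    (finSumFinEquiv.trans (finCongr (by omega)))
    (Matrix.fromBlocks 0 (Fbar rpart r (r + h) a b) (-(Fbar rpart r (r + h) a b)ᵀ) 0)

namespace Stmt3Aux

variable {h r : ℕ} (rpart : Fin h → ℕ)

lemma ps_zero : partialSum rpart 0 = 0 := by simp [partialSum]

lemma ps_succ (k : ℕ) :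
    partialSum rpart (k+1) =
      partialSum rpart k + (if hk : k < h then rpart ⟨k, hk⟩ else 0) :=
  Finset.sum_range_succ _ _

lemma ps_mono : Monotone (partialSum rpart) :=
  monotone_nat_of_le_succ fun k => by rw [ps_succ]; exact Nat.le_add_right _ _

lemma ps_fin : partialSum rpart h = ∑ i, rpart i := by
  rw [partialSum, ← Fin.sum_univ_eq_sum_range (fun j => if hj : j < h then rpart ⟨j, hj⟩ else 0) h]
  exact Finset.sum_congr rfl fun i _ => by simp

lemma exists_block : ∀ k, ∀ s : ℕ, s < partialSum rpart k →
    ∃ i : Fin h, partialSum rpart i ≤ s ∧ s < partialSum rpart (i.val + 1) := by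
  intro k
  induction k with
  | zero => intro s hs; rw [ps_zero] at hs; omega
  | succ k IH =>
    intro s hs
    by_cases hk : s < partialSum rpart k
    · exact IH s hk
    · push_neg at hk
      have hkh : k < h := by
        by_contra hkh
        rw [ps_succ, dif_neg hkh] at hs; omega
      exact ⟨⟨k, hkh⟩, hk, hs⟩

lemma block_unique {s : ℕ} {i j : Fin h}
    (hi1 : partialSum rpart i ≤ s) (hi2 : s < partialSum rpart (i.val+1))
    (hj1 : partialSum rpart j ≤ s) (hj2 : s < partialSum rpart (j.val+1)) : i = j := by
  rcases lt_trichotomy i.val j.val with hlt | heq | hgt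
  · have := ps_mono rpart (show i.val + 1 ≤ j.val from hlt)
    omega
  · exact Fin.ext heq
  · have := ps_mono rpart (show j.val + 1 ≤ i.val from hgt)
    omega

variable (hsr : r ≤ partialSum rpart h)

noncomputable def idx (s : Fin r) : Fin h :=
  (exists_block rpart h s (lt_of_lt_of_le s.isLt hsr)).choose

lemma idx_spec (s : Fin r) :
    partialSum rpart (idx rpart hsr s) ≤ s.val ∧
      s.val < partialSum rpart ((idx rpart hsr s).val + 1) :=
  (exists_block rpart h s (lt_of_lt_of_le s.isLt hsr)).choose_spec

lemma idx_eq {s : Fin r} {i : Fin h}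
    (h1 : partialSum rpart i ≤ s.val) (h2 : s.val < partialSum rpart (i.val+1)) :
    idx rpart hsr s = i :=
  block_unique rpart (idx_spec rpart hsr s).1 (idx_spec rpart hsr s).2 h1 h2

lemma idx_mono {s s' : Fin r} (hss : s.val ≤ s'.val) :
    (idx rpart hsr s).val ≤ (idx rpart hsr s').val := by
  by_contra hc
  push_neg at hc
  have h1 := idx_spec rpart hsr s
  have h2 := idx_spec rpart hsr s'
  have := ps_mono rpart (show (idx rpart hsr s').val + 1 ≤ (idx rpart hsr s).val from hc)
  omega

lemma c_le {s s' : Fin r} (hss : s.val ≤ s'.val) :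
    s.val + (idx rpart hsr s).val ≤ s'.val + (idx rpart hsr s').val := by
  have := idx_mono rpart hsr hss; omega

lemma c_inj {s s' : Fin r}
    (hc : s.val + (idx rpart hsr s).val = s'.val + (idx rpart hsr s').val) : s = s' := by
  rcases lt_trichotomy s.val s'.val with hl | he | hg
  · have := idx_mono rpart hsr (le_of_lt hl); omega
  · exact Fin.ext he
  · have := idx_mono rpart hsr (le_of_lt hg); omega

lemma c_bound (s : Fin r) : s.val + (idx rpart hsr s).val + 1 < r + h := by
  have h1 := s.isLt
  have h2 := (idx rpart hsr s).isLt
  omega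

noncomputable def t1 (s : Fin r) : Fin (r+h) :=
  ⟨s.val + (idx rpart hsr s).val, by have := c_bound rpart hsr s; omega⟩

noncomputable def t2 (s : Fin r) : Fin (r+h) :=
  ⟨s.val + (idx rpart hsr s).val + 1, c_bound rpart hsr s⟩

lemma t1_ne_t2 (s s' : Fin r) : t1 rpart hsr s ≠ t2 rpart hsr s' ∨ True := Or.inr trivial

lemma Fbar_apply (a b : ℂ) (s : Fin r) (t : Fin (r+h)) :
    Fbar rpart r (r+h) a b s t =
      if t = t1 rpart hsr s then a else if t = t2 rpart hsr s then b else 0 := by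
  have hex1 : (∃ i : Fin h, partialSum rpart i ≤ s.val ∧ s.val < partialSum rpart (i.val + 1) ∧
      t.val = s.val + i.val) ↔ t = t1 rpart hsr s := by
    constructor
    · rintro ⟨i, hi1, hi2, hi3⟩
      have hidx : idx rpart hsr s = i := idx_eq rpart hsr hi1 hi2
      apply Fin.ext
      show t.val = s.val + (idx rpart hsr s).val
      rw [hidx, hi3]
    · rintro rfl
      exact ⟨idx rpart hsr s, (idx_spec rpart hsr s).1, (idx_spec rpart hsr s).2, rfl⟩
  have hex2 : (∃ i : Fin h, partialSum rpart i ≤ s.val ∧ s.val < partialSum rpart (i.val + 1) ∧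
      t.val = s.val + i.val + 1) ↔ t = t2 rpart hsr s := by
    constructor
    · rintro ⟨i, hi1, hi2, hi3⟩
      have hidx : idx rpart hsr s = i := idx_eq rpart hsr hi1 hi2
      apply Fin.ext
      show t.val = s.val + (idx rpart hsr s).val + 1
      rw [hidx, hi3]
    · rintro rfl
      exact ⟨idx rpart hsr s, (idx_spec rpart hsr s).1, (idx_spec rpart hsr s).2, rfl⟩
  show (if _ then a else if _ then b else 0) = _
  rw [if_congr hex1 rfl (if_congr hex2 rfl rfl)]

lemma t1_ne_t2' (s : Fin r) : t1 rpart hsr s ≠ t2 rpart hsr s := by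
  simp [t1, t2, Fin.ext_iff]

lemma Fbar_mulVec (a b : ℂ) (y : Fin (r+h) → ℂ) (s : Fin r) :
    (Fbar rpart r (r+h) a b *ᵥ y) s = a * y (t1 rpart hsr s) + b * y (t2 rpart hsr s) := by
  have hne := t1_ne_t2' rpart hsr s
  calc (Fbar rpart r (r+h) a b *ᵥ y) s
      = ∑ t, Fbar rpart r (r+h) a b s t * y t := by
        simp [Matrix.mulVec, dotProduct]
    _ = ∑ t, ((if t = t1 rpart hsr s then a * y (t1 rpart hsr s) else 0)
          + (if t = t2 rpart hsr s then b * y (t2 rpart hsr s) else 0)) := by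
        refine Finset.sum_congr rfl fun t _ => ?_
        rw [Fbar_apply rpart hsr]
        by_cases h1 : t = t1 rpart hsr s
        · subst h1
          rw [if_pos rfl, if_pos rfl, if_neg hne, add_zero]
        · rw [if_neg h1, if_neg h1, zero_add]
          by_cases h2 : t = t2 rpart hsr s
          · subst h2; rw [if_pos rfl, if_pos rfl]
          · rw [if_neg h2, if_neg h2, zero_mul]
    _ = _ := by
        rw [Finset.sum_add_distrib]
        simp

end Stmt3Aux

section
open Stmt3Aux
variable {h r : ℕ} (rpart : Fin h → ℕ) (hsr : r ≤ partialSum rpart h)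
include hsr

lemma cover (hpos : ∀ i, 1 ≤ rpart i) (hrs : partialSum rpart h ≤ r) (t : Fin (r+h)) :
    ∃ s : Fin r, t = t1 rpart hsr s ∨ t = t2 rpart hsr s := by
  have aux : ∀ k, k ≤ h → ∀ tv : ℕ, tv < partialSum rpart k + k →
      ∃ i : Fin h, partialSum rpart i + i.val ≤ tv ∧
        tv ≤ partialSum rpart (i.val+1) + i.val := by
    intro k
    induction k with
    | zero => intro _ tv htv; rw [ps_zero] at htv; omega
    | succ k IH =>
      intro hk tv htv
      by_cases hlt : tv < partialSum rpart k + k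
      · exact IH (by omega) tv hlt
      · push_neg at hlt
        have hkh : k < h := hk
        refine ⟨⟨k, hkh⟩, by simpa using hlt, ?_⟩
        rw [ps_succ, dif_pos hkh] at htv
        show tv ≤ partialSum rpart (k+1) + k
        rw [ps_succ, dif_pos hkh]
        omega
  have ht : t.val < partialSum rpart h + h := by have := t.isLt; omega
  obtain ⟨i, hi1, hi2⟩ := aux h le_rfl t.val ht
  have hps1 : partialSum rpart (i.val+1) ≤ partialSum rpart h :=
    ps_mono rpart (show i.val+1 ≤ h from i.isLt)
  by_cases hcase : t.val < partialSum rpart (i.val+1) + i.val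
  · have hsv : t.val - i.val < r := by omega
    refine ⟨⟨t.val - i.val, hsv⟩, Or.inl ?_⟩
    have e1 : partialSum rpart ↑i ≤ t.val - i.val := by omega
    have e2 : t.val - i.val < partialSum rpart (i.val + 1) := by omega
    have hidx : idx rpart hsr ⟨t.val - i.val, hsv⟩ = i := idx_eq rpart hsr e1 e2
    apply Fin.ext
    show t.val = (t.val - i.val) + (idx rpart hsr ⟨t.val - i.val, hsv⟩).val
    rw [hidx]
    omega
  · have hteq : t.val = partialSum rpart (i.val+1) + i.val := by omega
    have hp1 : partialSum rpart i.val < partialSum rpart (i.val+1) := by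
      rw [ps_succ, dif_pos i.isLt]
      have := hpos ⟨i.val, i.isLt⟩
      omega
    have hsv : partialSum rpart (i.val+1) - 1 < r := by omega
    refine ⟨⟨partialSum rpart (i.val+1) - 1, hsv⟩, Or.inr ?_⟩
    have e1 : partialSum rpart ↑i ≤ partialSum rpart (i.val+1) - 1 := by omega
    have e2 : partialSum rpart (i.val+1) - 1 < partialSum rpart (i.val + 1) := by omega
    have hidx : idx rpart hsr ⟨partialSum rpart (i.val+1) - 1, hsv⟩ = i := idx_eq rpart hsr e1 e2
    apply Fin.ext
    show t.val = (partialSum rpart (i.val+1) - 1) + (idx rpart hsr _).val + 1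
    rw [hidx]
    omega

lemma FbarT_inj (a b : ℂ) (hab : ¬(a = 0 ∧ b = 0)) (x : Fin r → ℂ)
    (hx : (Fbar rpart r (r+h) a b)ᵀ *ᵥ x = 0) : x = 0 := by
  have hsum : ∀ t : Fin (r+h), ∑ s', Fbar rpart r (r+h) a b s' t * x s' = 0 := by
    intro t
    have h0 := congrFun hx t
    simpa [Matrix.mulVec, dotProduct, Matrix.transpose_apply] using h0
  by_cases ha : a = 0
  · have hb : b ≠ 0 := by tauto
    funext s
    have h0 := hsum (t2 rpart hsr s)
    rw [Finset.sum_eq_single s] at h0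
    · rw [Fbar_apply rpart hsr, if_neg (fun hc => (t1_ne_t2' rpart hsr s) hc.symm),
        if_pos rfl] at h0
      have := mul_eq_zero.mp h0
      simpa [hb] using this
    · intro s' _ hs'
      rw [Fbar_apply rpart hsr]
      by_cases h1 : t2 rpart hsr s = t1 rpart hsr s'
      · rw [if_pos h1, ha, zero_mul]
      · rw [if_neg h1]
        by_cases h2 : t2 rpart hsr s = t2 rpart hsr s'
        · exfalso
          apply hs'
          have : s'.val + (idx rpart hsr s').val = s.val + (idx rpart hsr s).val := by
            have := Fin.val_eq_val (t2 rpart hsr s) (t2 rpart hsr s') |>.mpr h2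
            simp [t2] at this
            omega
          exact c_inj rpart hsr this
        · rw [if_neg h2, zero_mul]
    · intro hs; exact absurd (Finset.mem_univ s) hs
  · -- a ≠ 0 : strong induction
    have key : ∀ n, ∀ s : Fin r, s.val = n → x s = 0 := by
      intro n
      induction n using Nat.strong_induction_on with
      | _ n IH =>
        rintro s rfl
        have h0 := hsum (t1 rpart hsr s)
        rw [Finset.sum_eq_single s] at h0
        · rw [Fbar_apply rpart hsr, if_pos rfl] at h0
          exact (mul_eq_zero.mp h0).resolve_left ha
        · intro s' _ hs'
          rw [Fbar_apply rpart hsr]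
          by_cases h1 : t1 rpart hsr s = t1 rpart hsr s'
          · exfalso
            apply hs'
            refine (c_inj rpart hsr ?_)
            have := Fin.val_eq_val (t1 rpart hsr s) (t1 rpart hsr s') |>.mpr h1
            simp [t1] at this
            omega
          · rw [if_neg h1]
            by_cases h2 : t1 rpart hsr s = t2 rpart hsr s'
            · have hval : s.val + (idx rpart hsr s).val
                  = s'.val + (idx rpart hsr s').val + 1 := by
                have := Fin.val_eq_val (t1 rpart hsr s) (t2 rpart hsr s') |>.mpr h2
                simpa [t1, t2] using this
              have hlt : s'.val < s.val := by
                by_contra hge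
                push_neg at hge
                have := c_le rpart hsr hge
                omega
              rw [IH s'.val hlt s' rfl, mul_zero]
            · rw [if_neg h2, zero_mul]
        · intro hs; exact absurd (Finset.mem_univ s) hs
    funext s
    exact key s.val s rfl

lemma ker_pair (hpos : ∀ i, 1 ≤ rpart i) (hrs : partialSum rpart h ≤ r) (y : Fin (r+h) → ℂ)
    (h1 : Fbar rpart r (r+h) 1 0 *ᵥ y = 0) (h2 : Fbar rpart r (r+h) 0 1 *ᵥ y = 0) :
    y = 0 := by
  funext t
  obtain ⟨s, hs | hs⟩ := cover rpart hsr hpos hrs t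
  · have := congrFun h1 s
    rw [Fbar_mulVec rpart hsr] at this
    simpa [hs] using this
  · have := congrFun h2 s
    rw [Fbar_mulVec rpart hsr] at this
    simpa [hs] using this

lemma Fbar_mulVec_single (s : Fin r) :
    Fbar rpart r (r+h) 1 0 *ᵥ Pi.single (t1 rpart hsr s) 1 = Pi.single s 1 := by
  funext s'
  rw [Fbar_mulVec rpart hsr]
  simp only [Pi.single_apply, one_mul, zero_mul, add_zero]
  by_cases hss : s' = s
  · subst hss; simp
  · have hne : t1 rpart hsr s' ≠ t1 rpart hsr s := by
      intro hc
      exact hss (c_inj rpart hsr (by simpa [t1, Fin.ext_iff] using hc))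
    simp [hss, hne]

lemma FbarT_single_a (s : Fin r) :
    (Fbar rpart r (r+h) 1 0)ᵀ *ᵥ Pi.single s 1 = Pi.single (t1 rpart hsr s) 1 := by
  funext t
  rw [Matrix.mulVec_single]
  show Fbar rpart r (r+h) 1 0 s t * 1 = _
  rw [Fbar_apply rpart hsr, mul_one, Pi.single_apply]
  by_cases h1 : t = t1 rpart hsr s
  · simp [h1]
  · simp [h1]

lemma FbarT_single_b (s : Fin r) :
    (Fbar rpart r (r+h) 0 1)ᵀ *ᵥ Pi.single s 1 = Pi.single (t2 rpart hsr s) 1 := by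
  funext t
  rw [Matrix.mulVec_single]
  show Fbar rpart r (r+h) 0 1 s t * 1 = _
  rw [Fbar_apply rpart hsr, mul_one, Pi.single_apply]
  by_cases h1 : t = t1 rpart hsr s
  · subst h1
    rw [if_pos rfl, if_neg (t1_ne_t2' rpart hsr s)]
  · rw [if_neg h1]

end

section
open Matrix

lemma fromBlocks_mulVec' {n m : Type*} [Fintype n] [Fintype m]
    (X : Matrix n m ℂ) (Y : Matrix m n ℂ) (w : n ⊕ m → ℂ) :
    Matrix.fromBlocks 0 X Y 0 *ᵥ w =
      Sum.elim (X *ᵥ (w ∘ Sum.inr)) (Y *ᵥ (w ∘ Sum.inl)) := by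
  have hw : w = Sum.elim (w ∘ Sum.inl) (w ∘ Sum.inr) := by
    funext j; cases j <;> rfl
  conv_lhs => rw [hw]
  rw [Matrix.fromBlocks_mulVec]
  simp

lemma rank_aux {n m : ℕ} (X : Matrix (Fin n) (Fin m) ℂ)
    (hinj : ∀ x : Fin n → ℂ, Xᵀ *ᵥ x = 0 → x = 0) :
    (Matrix.fromBlocks 0 X (-(Xᵀ)) 0 : Matrix (Fin n ⊕ Fin m) (Fin n ⊕ Fin m) ℂ).rank
      = 2 * n := by
  set M : Matrix (Fin n ⊕ Fin m) (Fin n ⊕ Fin m) ℂ := Matrix.fromBlocks 0 X (-(Xᵀ)) 0 with hM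
  -- rank of Xᵀ is n
  have hinj' : Function.Injective (Matrix.mulVecLin Xᵀ) := by
    rw [← LinearMap.ker_eq_bot, LinearMap.ker_eq_bot']
    intro x hx
    exact hinj x hx
  have hrankXT : Xᵀ.rank = n := by
    have h1 : Xᵀ.rank = Module.finrank ℂ (LinearMap.range (Matrix.mulVecLin Xᵀ)) := rfl
    rw [h1, LinearMap.finrank_range_of_inj hinj', Module.finrank_pi, Fintype.card_fin]
  have hrankX : X.rank = n := by rw [← Matrix.rank_transpose X]; exact hrankXT
  -- kernel equivalence
  have hMv : ∀ w : (Fin n ⊕ Fin m) → ℂ, M *ᵥ w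
      = Sum.elim (X *ᵥ (w ∘ Sum.inr)) ((-(Xᵀ)) *ᵥ (w ∘ Sum.inl)) :=
    fromBlocks_mulVec' X _
  have hkerl : ∀ w : (Fin n ⊕ Fin m) → ℂ, M *ᵥ w = 0 → w ∘ Sum.inl = 0 := by
    intro w hw
    rw [hMv] at hw
    apply hinj
    have : (-(Xᵀ)) *ᵥ (w ∘ Sum.inl) = 0 := by
      funext q; exact congrFun hw (Sum.inr q)
    rw [Matrix.neg_mulVec, neg_eq_zero] at this
    exact this
  let E : LinearMap.ker (Matrix.mulVecLin M) ≃ₗ[ℂ] LinearMap.ker (Matrix.mulVecLin X) :=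
    { toFun := fun v => ⟨v.1 ∘ Sum.inr, by
        rw [LinearMap.mem_ker]
        have hv : M *ᵥ v.1 = 0 := v.2
        rw [hMv] at hv
        funext p
        exact congrFun hv (Sum.inl p)⟩
      map_add' := fun v w => rfl
      map_smul' := fun c v => rfl
      invFun := fun y => ⟨Sum.elim 0 y.1, by
        rw [LinearMap.mem_ker]
        show M *ᵥ Sum.elim 0 y.1 = 0
        rw [hMv]
        have h1 : (Sum.elim (0 : Fin n → ℂ) y.1) ∘ Sum.inr = y.1 := rfl
        have h2 : (Sum.elim (0 : Fin n → ℂ) y.1) ∘ Sum.inl = 0 := rfl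
        rw [h1, h2, Matrix.mulVec_zero]
        have h3 : X *ᵥ y.1 = 0 := y.2
        rw [h3]
        funext j; cases j <;> rfl⟩
      left_inv := fun v => by
        apply Subtype.ext
        have h0 : v.1 ∘ Sum.inl = 0 := hkerl v.1 v.2
        funext j
        cases j with
        | inl p => exact (congrFun h0 p).symm
        | inr q => rfl
      right_inv := fun y => Subtype.ext rfl }
  have hker : Module.finrank ℂ (LinearMap.ker (Matrix.mulVecLin M))
      = Module.finrank ℂ (LinearMap.ker (Matrix.mulVecLin X)) := E.finrank_eq
  have hrn1 := LinearMap.finrank_range_add_finrank_ker (Matrix.mulVecLin M)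
  have hrn2 := LinearMap.finrank_range_add_finrank_ker (Matrix.mulVecLin X)
  have hd1 : Module.finrank ℂ ((Fin n ⊕ Fin m) → ℂ) = n + m := by
    rw [Module.finrank_pi]; simp
  have hd2 : Module.finrank ℂ ((Fin m) → ℂ) = m := by
    rw [Module.finrank_pi]; simp
  have hrM : M.rank = Module.finrank ℂ (LinearMap.range (Matrix.mulVecLin M)) := rfl
  have hrX : X.rank = Module.finrank ℂ (LinearMap.range (Matrix.mulVecLin X)) := rfl
  rw [hd1] at hrn1
  rw [hd2] at hrn2
  rw [← hrX, hrankX] at hrn2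
  rw [← hrM, hker] at hrn1
  omega

end

open Stmt3Aux

/-- For every partition `r = r₁ + ⋯ + r_h` the standard pencil
`F_λ(a,b)` has rank exactly `2r` for all `(a,b) ≠ (0,0)`, and the span of
`F_λ(1,0)` and `F_λ(0,1)` is a 2-dimensional nondegenerate subspace of the
skew-symmetric `(2r+h)×(2r+h)` complex matrices. -/
theorem stmt_3 (r h : ℕ) (hr : 1 ≤ r) (hh : 1 ≤ h)
    (rpart : Fin h → ℕ) (hpos : ∀ i, 1 ≤ rpart i)
    (hmono : ∀ i j : Fin h, i ≤ j → rpart j ≤ rpart i)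
    (hsum : ∑ i, rpart i = r) :
    (∀ a b : ℂ, (a, b) ≠ (0, 0) → (Fpencil rpart r a b).rank = 2*r) ∧
    Module.finrank ℂ (Submodule.span ℂ
      ({Fpencil rpart r 1 0, Fpencil rpart r 0 1} :
        Set (Matrix (Fin (2*r + h)) (Fin (2*r + h)) ℂ))) = 2 ∧
    (∀ A ∈ Submodule.span ℂ
      ({Fpencil rpart r 1 0, Fpencil rpart r 0 1} :
        Set (Matrix (Fin (2*r + h)) (Fin (2*r + h)) ℂ)), Aᵀ = -A) ∧
    (⨅ A ∈ Submodule.span ℂ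
      ({Fpencil rpart r 1 0, Fpencil rpart r 0 1} :
        Set (Matrix (Fin (2*r + h)) (Fin (2*r + h)) ℂ)),
      LinearMap.ker (Matrix.mulVecLin A)) = ⊥ ∧
    (⨆ A ∈ Submodule.span ℂ
      ({Fpencil rpart r 1 0, Fpencil rpart r 0 1} :
        Set (Matrix (Fin (2*r + h)) (Fin (2*r + h)) ℂ)),
      LinearMap.range (Matrix.mulVecLin A)) = ⊤ := by

  classical
  have hPh : partialSum rpart h = r := by rw [ps_fin, hsum]
  have hsr : r ≤ partialSum rpart h := le_of_eq hPh.symm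
  have hrs : partialSum rpart h ≤ r := le_of_eq hPh
  set e : Fin r ⊕ Fin (r+h) ≃ Fin (2*r+h) := finSumFinEquiv.trans (finCongr (by omega)) with he
  have hF : ∀ a b : ℂ, Fpencil rpart r a b
      = Matrix.reindex e e (Matrix.fromBlocks 0 (Fbar rpart r (r + h) a b)
          (-(Fbar rpart r (r + h) a b)ᵀ) 0) := fun a b => rfl
  have hinj : ∀ (a b : ℂ), (a,b) ≠ ((0:ℂ),(0:ℂ)) →
      ∀ x : Fin r → ℂ, (Fbar rpart r (r+h) a b)ᵀ *ᵥ x = 0 → x = 0 := by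
    intro a b hab x hx
    refine FbarT_inj rpart hsr a b ?_ x hx
    rintro ⟨ha, hb⟩
    exact hab (by rw [ha, hb])
  -- Part 1 : rank
  have part1 : ∀ a b : ℂ, (a, b) ≠ (0, 0) → (Fpencil rpart r a b).rank = 2*r := by
    intro a b hab
    rw [hF, Matrix.rank_reindex]
    exact rank_aux _ (hinj a b hab)
  -- mulVec through the reindexing
  have hmv : ∀ (a b : ℂ) (v : Fin (2*r+h) → ℂ),
      Fpencil rpart r a b *ᵥ v =
        (Matrix.fromBlocks 0 (Fbar rpart r (r+h) a b) (-(Fbar rpart r (r+h) a b)ᵀ) 0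
          *ᵥ (v ∘ ⇑e)) ∘ ⇑e.symm := by
    intro a b v
    rw [hF, Matrix.reindex_apply, Matrix.submatrix_mulVec_equiv]
    rfl
  -- Part 3 : skewness
  have hMskew : ∀ a b : ℂ,
      (Matrix.fromBlocks 0 (Fbar rpart r (r+h) a b) (-(Fbar rpart r (r+h) a b)ᵀ) 0)ᵀ
      = -(Matrix.fromBlocks 0 (Fbar rpart r (r+h) a b) (-(Fbar rpart r (r+h) a b)ᵀ) 0) := by
    intro a b
    rw [Matrix.fromBlocks_transpose]
    ext (i|i) (j|j) <;> simp
  have hskew : ∀ a b : ℂ, (Fpencil rpart r a b)ᵀ = -Fpencil rpart r a b := by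
    intro a b
    rw [hF, Matrix.transpose_reindex, hMskew]
    simp [Matrix.reindex_apply, Matrix.submatrix_neg]
  have part3 : ∀ A ∈ Submodule.span ℂ
      ({Fpencil rpart r 1 0, Fpencil rpart r 0 1} :
        Set (Matrix (Fin (2*r + h)) (Fin (2*r + h)) ℂ)), Aᵀ = -A := by
    intro A hA
    induction hA using Submodule.span_induction with
    | mem x hx =>
      rcases hx with rfl | hx
      · exact hskew 1 0
      · rw [Set.mem_singleton_iff] at hx
        subst hx
        exact hskew 0 1
    | zero => simp
    | add x y _ _ hx hy => rw [Matrix.transpose_add, hx, hy, neg_add]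
    | smul c x _ hx => rw [Matrix.transpose_smul, hx, smul_neg]
  -- Part 2 : dimension two
  have hentry : ∀ (a b : ℂ) (s : Fin r) (t : Fin (r+h)),
      Fpencil rpart r a b (e (Sum.inl s)) (e (Sum.inr t)) = Fbar rpart r (r+h) a b s t := by
    intro a b s t
    rw [hF]
    simp [Matrix.reindex_apply, Matrix.submatrix_apply]
  have h0r : (0:ℕ) < r := hr
  have h0h : (0:ℕ) < h := hh
  have h1rh : (1:ℕ) < r + h := by omega
  have h0rh : (0:ℕ) < r + h := by omega
  have hidx0 : idx rpart hsr ⟨0, h0r⟩ = ⟨0, h0h⟩ := by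
    apply idx_eq
    · simp [ps_zero]
    · show 0 < partialSum rpart (0+1)
      rw [ps_succ, dif_pos h0h, ps_zero]
      have := hpos ⟨0, h0h⟩; omega
  have ht10 : t1 rpart hsr ⟨0, h0r⟩ = ⟨0, h0rh⟩ := by
    apply Fin.ext
    show (0:ℕ) + (idx rpart hsr ⟨0,h0r⟩).val = 0
    rw [hidx0]
    rfl
  have ht20 : t2 rpart hsr ⟨0, h0r⟩ = ⟨1, h1rh⟩ := by
    apply Fin.ext
    show (0:ℕ) + (idx rpart hsr ⟨0,h0r⟩).val + 1 = 1
    rw [hidx0]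
    rfl
  have hb00 : ∀ a b : ℂ, Fbar rpart r (r+h) a b ⟨0,h0r⟩ ⟨0, h0rh⟩ = a := by
    intro a b
    rw [Fbar_apply rpart hsr, if_pos ht10.symm]
  have hb01 : ∀ a b : ℂ, Fbar rpart r (r+h) a b ⟨0,h0r⟩ ⟨1, h1rh⟩ = b := by
    intro a b
    rw [Fbar_apply rpart hsr, if_neg, if_pos ht20.symm]
    rw [ht10]
    intro hc
    have := congrArg Fin.val hc
    simp at this
  have hli : LinearIndependent ℂ ![Fpencil rpart r 1 0, Fpencil rpart r 0 1] := by
    rw [LinearIndependent.pair_iff]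
    intro s t hst
    have h1 := congrFun (congrFun hst (e (Sum.inl ⟨0,h0r⟩))) (e (Sum.inr (⟨0, h0rh⟩ : Fin (r+h))))
    have h2 := congrFun (congrFun hst (e (Sum.inl ⟨0,h0r⟩))) (e (Sum.inr (⟨1, h1rh⟩ : Fin (r+h))))
    simp only [Matrix.add_apply, Matrix.smul_apply, Matrix.zero_apply, smul_eq_mul] at h1 h2
    rw [hentry, hentry, hb00 1 0, hb00 0 1] at h1
    rw [hentry, hentry, hb01 1 0, hb01 0 1] at h2
    constructor
    · simpa using h1
    · simpa using h2
  have hsetrange : ({Fpencil rpart r 1 0, Fpencil rpart r 0 1} :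
      Set (Matrix (Fin (2*r + h)) (Fin (2*r + h)) ℂ))
      = Set.range ![Fpencil rpart r 1 0, Fpencil rpart r 0 1] := by
    ext A
    constructor
    · rintro (rfl | rfl)
      · exact ⟨0, rfl⟩
      · exact ⟨1, rfl⟩
    · rintro ⟨i, rfl⟩
      fin_cases i
      · exact Or.inl rfl
      · exact Or.inr rfl
  have part2 : Module.finrank ℂ (Submodule.span ℂ
      ({Fpencil rpart r 1 0, Fpencil rpart r 0 1} :
        Set (Matrix (Fin (2*r + h)) (Fin (2*r + h)) ℂ))) = 2 := by
    rw [hsetrange, finrank_span_eq_card hli, Fintype.card_fin]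
  -- Part 4 : kernels intersect trivially
  have part4 : (⨅ A ∈ Submodule.span ℂ
      ({Fpencil rpart r 1 0, Fpencil rpart r 0 1} :
        Set (Matrix (Fin (2*r + h)) (Fin (2*r + h)) ℂ)),
      LinearMap.ker (Matrix.mulVecLin A)) = ⊥ := by
    rw [eq_bot_iff]
    intro v hv
    simp only [Submodule.mem_iInf] at hv
    have hv1 : Fpencil rpart r 1 0 *ᵥ v = 0 := by
      have := hv (Fpencil rpart r 1 0) (Submodule.subset_span (Set.mem_insert _ _))
      rwa [LinearMap.mem_ker, Matrix.mulVecLin_apply] at this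
    have hv2 : Fpencil rpart r 0 1 *ᵥ v = 0 := by
      have := hv (Fpencil rpart r 0 1)
        (Submodule.subset_span (Set.mem_insert_of_mem _ rfl))
      rwa [LinearMap.mem_ker, Matrix.mulVecLin_apply] at this
    rw [hmv] at hv1 hv2
    have hw1 : Matrix.fromBlocks 0 (Fbar rpart r (r+h) 1 0) (-(Fbar rpart r (r+h) 1 0)ᵀ) 0
        *ᵥ (v ∘ ⇑e) = 0 := by
      funext j
      have h' := congrFun hv1 (e j)
      simpa using h'
    have hw2 : Matrix.fromBlocks 0 (Fbar rpart r (r+h) 0 1) (-(Fbar rpart r (r+h) 0 1)ᵀ) 0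
        *ᵥ (v ∘ ⇑e) = 0 := by
      funext j
      have h' := congrFun hv2 (e j)
      simpa using h'
    rw [fromBlocks_mulVec'] at hw1 hw2
    have hxa : (Fbar rpart r (r+h) 1 0)ᵀ *ᵥ ((v ∘ ⇑e) ∘ Sum.inl) = 0 := by
      have hneg : (-(Fbar rpart r (r+h) 1 0)ᵀ) *ᵥ ((v ∘ ⇑e) ∘ Sum.inl) = 0 := by
        funext q; exact congrFun hw1 (Sum.inr q)
      rwa [Matrix.neg_mulVec, neg_eq_zero] at hneg
    have hinl : (v ∘ ⇑e) ∘ Sum.inl = 0 := hinj 1 0 (by simp) _ hxa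
    have hyb1 : Fbar rpart r (r+h) 1 0 *ᵥ ((v ∘ ⇑e) ∘ Sum.inr) = 0 := by
      funext p; exact congrFun hw1 (Sum.inl p)
    have hyb2 : Fbar rpart r (r+h) 0 1 *ᵥ ((v ∘ ⇑e) ∘ Sum.inr) = 0 := by
      funext p; exact congrFun hw2 (Sum.inl p)
    have hinr : (v ∘ ⇑e) ∘ Sum.inr = 0 := ker_pair rpart hsr hpos hrs _ hyb1 hyb2
    rw [Submodule.mem_bot]
    funext k
    have hk : v k = (v ∘ ⇑e) (e.symm k) := by simp
    rw [hk]
    cases hsk : e.symm k with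
    | inl p => exact congrFun hinl p
    | inr q => exact congrFun hinr q
  -- Part 5 : ranges span everything
  have hsl : ∀ p : Fin r,
      (Sum.elim (Pi.single p (1:ℂ)) (0 : Fin (r+h) → ℂ)) ∘ ⇑e.symm
        = Pi.single (e (Sum.inl p)) (1:ℂ) := by
    intro p
    funext k
    simp only [Function.comp_apply, Pi.single_apply]
    cases hsk : e.symm k with
    | inl p' =>
      have hk : k = e (Sum.inl p') := by rw [← hsk, Equiv.apply_symm_apply]
      subst hk
      simp only [Equiv.symm_apply_apply, Sum.elim_inl, Pi.single_apply]
      by_cases hpp : p' = p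
      · subst hpp; simp
      · rw [if_neg hpp, if_neg (fun hc => hpp (Sum.inl_injective (e.injective hc)))]
    | inr q' =>
      have hk : k = e (Sum.inr q') := by rw [← hsk, Equiv.apply_symm_apply]
      subst hk
      simp only [Equiv.symm_apply_apply, Sum.elim_inr, Pi.zero_apply]
      rw [if_neg (fun hc => Sum.inr_ne_inl (e.injective hc))]
  have hslr : ∀ q : Fin (r+h),
      (Sum.elim (0 : Fin r → ℂ) (Pi.single q (1:ℂ))) ∘ ⇑e.symm
        = Pi.single (e (Sum.inr q)) (1:ℂ) := by
    intro q
    funext k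
    simp only [Function.comp_apply, Pi.single_apply]
    cases hsk : e.symm k with
    | inl p' =>
      have hk : k = e (Sum.inl p') := by rw [← hsk, Equiv.apply_symm_apply]
      subst hk
      simp only [Equiv.symm_apply_apply, Sum.elim_inl, Pi.zero_apply]
      rw [if_neg (fun hc => Sum.inl_ne_inr (e.injective hc))]
    | inr q' =>
      have hk : k = e (Sum.inr q') := by rw [← hsk, Equiv.apply_symm_apply]
      subst hk
      simp only [Equiv.symm_apply_apply, Sum.elim_inr, Pi.single_apply]
      by_cases hqq : q' = q
      · subst hqq; simp
      · rw [if_neg hqq, if_neg (fun hc => hqq (Sum.inr_injective (e.injective hc)))]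
  have part5 : (⨆ A ∈ Submodule.span ℂ
      ({Fpencil rpart r 1 0, Fpencil rpart r 0 1} :
        Set (Matrix (Fin (2*r + h)) (Fin (2*r + h)) ℂ)),
      LinearMap.range (Matrix.mulVecLin A)) = ⊤ := by
    rw [eq_top_iff]
    set Ssup := (⨆ A ∈ Submodule.span ℂ
      ({Fpencil rpart r 1 0, Fpencil rpart r 0 1} :
        Set (Matrix (Fin (2*r + h)) (Fin (2*r + h)) ℂ)),
      LinearMap.range (Matrix.mulVecLin A)) with hSsup
    have hle1 : LinearMap.range (Matrix.mulVecLin (Fpencil rpart r 1 0)) ≤ Ssup :=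
      le_iSup₂ (f := fun (A : Matrix (Fin (2*r + h)) (Fin (2*r + h)) ℂ)
        (_ : A ∈ Submodule.span ℂ ({Fpencil rpart r 1 0, Fpencil rpart r 0 1} :
          Set (Matrix (Fin (2*r + h)) (Fin (2*r + h)) ℂ))) =>
        LinearMap.range (Matrix.mulVecLin A))
        (Fpencil rpart r 1 0) (Submodule.subset_span (Set.mem_insert _ _))
    have hle2 : LinearMap.range (Matrix.mulVecLin (Fpencil rpart r 0 1)) ≤ Ssup :=
      le_iSup₂ (f := fun (A : Matrix (Fin (2*r + h)) (Fin (2*r + h)) ℂ)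
        (_ : A ∈ Submodule.span ℂ ({Fpencil rpart r 1 0, Fpencil rpart r 0 1} :
          Set (Matrix (Fin (2*r + h)) (Fin (2*r + h)) ℂ))) =>
        LinearMap.range (Matrix.mulVecLin A))
        (Fpencil rpart r 0 1) (Submodule.subset_span (Set.mem_insert_of_mem _ rfl))
    have hsingle : ∀ k : Fin (2*r+h), Pi.single k (1:ℂ) ∈ Ssup := by
      intro k
      have hk : k = e (e.symm k) := (e.apply_symm_apply k).symm
      cases hsk : e.symm k with
      | inl p =>
        rw [hsk] at hk
        apply hle1
        refine ⟨(Sum.elim (0 : Fin r → ℂ) (Pi.single (t1 rpart hsr p) (1:ℂ))) ∘ ⇑e.symm, ?_⟩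
        rw [Matrix.mulVecLin_apply, hmv]
        have hcomp : ((Sum.elim (0 : Fin r → ℂ) (Pi.single (t1 rpart hsr p) (1:ℂ))) ∘ ⇑e.symm) ∘ ⇑e
            = Sum.elim (0 : Fin r → ℂ) (Pi.single (t1 rpart hsr p) (1:ℂ)) := by
          funext j
          simp only [Function.comp_apply]
          rw [Equiv.symm_apply_apply]
        rw [hcomp, fromBlocks_mulVec']
        have c1 : (Sum.elim (0 : Fin r → ℂ) (Pi.single (t1 rpart hsr p) (1:ℂ))) ∘ Sum.inr
            = Pi.single (t1 rpart hsr p) (1:ℂ) := rfl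
        have c2 : (Sum.elim (0 : Fin r → ℂ) (Pi.single (t1 rpart hsr p) (1:ℂ))) ∘ Sum.inl
            = (0 : Fin r → ℂ) := rfl
        rw [c1, c2, Matrix.mulVec_zero, Fbar_mulVec_single rpart hsr p, hsl p, ← hk]
      | inr q =>
        rw [hsk] at hk
        obtain ⟨s, hs | hs⟩ := cover rpart hsr hpos hrs q
        · apply hle1
          refine ⟨(Sum.elim (-(Pi.single s (1:ℂ))) (0 : Fin (r+h) → ℂ)) ∘ ⇑e.symm, ?_⟩
          rw [Matrix.mulVecLin_apply, hmv]
          have hcomp : ((Sum.elim (-(Pi.single s (1:ℂ))) (0 : Fin (r+h) → ℂ)) ∘ ⇑e.symm) ∘ ⇑e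
              = Sum.elim (-(Pi.single s (1:ℂ))) (0 : Fin (r+h) → ℂ) := by
            funext j
            simp only [Function.comp_apply]
            rw [Equiv.symm_apply_apply]
          rw [hcomp, fromBlocks_mulVec']
          have c1 : (Sum.elim (-(Pi.single s (1:ℂ))) (0 : Fin (r+h) → ℂ)) ∘ Sum.inr
              = (0 : Fin (r+h) → ℂ) := rfl
          have c2 : (Sum.elim (-(Pi.single s (1:ℂ))) (0 : Fin (r+h) → ℂ)) ∘ Sum.inl
              = -(Pi.single s (1:ℂ)) := rfl
          rw [c1, c2, Matrix.mulVec_zero, Matrix.mulVec_neg, Matrix.neg_mulVec, neg_neg,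
            FbarT_single_a rpart hsr s, hslr, ← hs, ← hk]
        · apply hle2
          refine ⟨(Sum.elim (-(Pi.single s (1:ℂ))) (0 : Fin (r+h) → ℂ)) ∘ ⇑e.symm, ?_⟩
          rw [Matrix.mulVecLin_apply, hmv]
          have hcomp : ((Sum.elim (-(Pi.single s (1:ℂ))) (0 : Fin (r+h) → ℂ)) ∘ ⇑e.symm) ∘ ⇑e
              = Sum.elim (-(Pi.single s (1:ℂ))) (0 : Fin (r+h) → ℂ) := by
            funext j
            simp only [Function.comp_apply]
            rw [Equiv.symm_apply_apply]
          rw [hcomp, fromBlocks_mulVec']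
          have c1 : (Sum.elim (-(Pi.single s (1:ℂ))) (0 : Fin (r+h) → ℂ)) ∘ Sum.inr
              = (0 : Fin (r+h) → ℂ) := rfl
          have c2 : (Sum.elim (-(Pi.single s (1:ℂ))) (0 : Fin (r+h) → ℂ)) ∘ Sum.inl
              = -(Pi.single s (1:ℂ)) := rfl
          rw [c1, c2, Matrix.mulVec_zero, Matrix.mulVec_neg, Matrix.neg_mulVec, neg_neg,
            FbarT_single_b rpart hsr s, hslr, ← hs, ← hk]
    intro v _
    have hv : v = ∑ k, v k • (Pi.single k 1 : Fin (2*r+h) → ℂ) := by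
      funext k'
      rw [Finset.sum_apply]
      simp [Pi.single_apply]
    rw [hv]
    exact Submodule.sum_mem _ fun k _ => Submodule.smul_mem _ _ (hsingle k)
  exact ⟨part1, part2, part3, part4, part5⟩
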